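/- For every natural number m ≥ 1 and every real x with −1/2 < x < 1/2, one has P_m(x) < P_{m+1}(x). -/

import Mathlib

open Real

/-- The summand `a_{j,k} = (-π²/4)^k / (2j+2k)! · C(j+k, j)`. -/
noncomputable def a (j k : ℕ) : ℝ :=
  (-(π ^ 2) / 4) ^ k / (Nat.factorial (2 * j + 2 * k)) * (Nat.choose (j + k) j)

/-- `t_j = Σ_{k=0}^∞ a_{j,k}`. -/
noncomputable def t (j : ℕ) : ℝ := ∑' k : ℕ, a j k

/-- `P_m(x) = Σ_{j=1}^m t_j π^{2j} (1/4 − x²)^j`. -/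
noncomputable def P (m : ℕ) (x : ℝ) : ℝ :=
  ∑ j ∈ Finset.Icc 1 m, t j * π ^ (2 * j) * (1 / 4 - x ^ 2) ^ j

noncomputable def b (j k : ℕ) : ℝ :=
  (π ^ 2 / 4) ^ k / (Nat.factorial (2 * j + 2 * k)) * (Nat.choose (j + k) j)

lemma a_eq (j k : ℕ) : a j k = (-1) ^ k * b j k := by
  unfold a b
  rw [neg_div, neg_pow]
  ring

lemma b_pos (j k : ℕ) : 0 < b j k := by
  unfold b
  have h2 : (0:ℝ) < (Nat.factorial (2 * j + 2 * k) : ℝ) := by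
    exact_mod_cast Nat.factorial_pos _
  have h3 : (0:ℝ) < (Nat.choose (j + k) j : ℝ) := by
    exact_mod_cast Nat.choose_pos (Nat.le_add_right j k)
  positivity

lemma u_lt_three : π ^ 2 / 4 < 3 := by
  nlinarith [Real.pi_lt_d2, Real.pi_gt_three]

lemma b_step (j k : ℕ) (hj : 1 ≤ j) : b j (k + 1) ≤ 1 / 2 * b j k := by
  have hC : ((j + k + 1 : ℕ) : ℝ) * (Nat.choose (j + k) j : ℝ)
      = (Nat.choose (j + (k + 1)) j : ℝ) * ((k : ℝ) + 1) := by
    have h1 : Nat.choose (j + k) j = Nat.choose (j + k) k := Nat.choose_symm_add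
    have h2 : Nat.choose (j + (k + 1)) j = Nat.choose (j + (k + 1)) (k + 1) :=
      Nat.choose_symm_of_eq_add (by omega)
    have h := Nat.add_one_mul_choose_eq (j + k) k
    rw [h1, h2]
    have h3 : j + (k + 1) = (j + k).succ := by omega
    rw [h3]
    exact_mod_cast congrArg (Nat.cast (R := ℝ)) h
  have hF : ((Nat.factorial (2 * j + 2 * (k + 1)) : ℕ) : ℝ)
      = ((2:ℝ) * j + 2 * k + 2) * ((2:ℝ) * j + 2 * k + 1)
        * (Nat.factorial (2 * j + 2 * k) : ℝ) := by
    have h3 : 2 * j + 2 * (k + 1) = (2 * j + 2 * k + 1) + 1 := by omega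
    rw [h3, Nat.factorial_succ, Nat.factorial_succ]
    push_cast
    ring
  have hupos : 0 < π ^ 2 / 4 := by positivity
  have hu3 : π ^ 2 / 4 < 3 := u_lt_three
  have hFpos : (0:ℝ) < (Nat.factorial (2 * j + 2 * k) : ℝ) := by
    exact_mod_cast Nat.factorial_pos _
  have hD : (0:ℝ) < ((2:ℝ) * j + 2 * k + 2) * ((2:ℝ) * j + 2 * k + 1) * ((k:ℝ) + 1) := by
    positivity
  have heq : b j (k + 1) * (((2:ℝ) * j + 2 * k + 2) * ((2:ℝ) * j + 2 * k + 1) * ((k:ℝ) + 1))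
      = (π ^ 2 / 4) * ((j:ℝ) + k + 1) * b j k := by
    unfold b
    rw [hF]
    have hC' : (Nat.choose (j + (k + 1)) j : ℝ) * ((k : ℝ) + 1)
        = ((j:ℝ) + k + 1) * (Nat.choose (j + k) j : ℝ) := by
      rw [← hC]; push_cast; ring
    field_simp
    linear_combination (π ^ 2 * (π ^ 2 / 4) ^ k) * hC'
  have hbound : (π ^ 2 / 4) * ((j:ℝ) + k + 1) ≤ 1 / 2 * (((2:ℝ) * j + 2 * k + 2) * ((2:ℝ) * j + 2 * k + 1) * ((k:ℝ) + 1)) := by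
    have h1 : (3:ℝ) ≤ ((2:ℝ) * j + 2 * k + 1) * ((k:ℝ) + 1) := by
      have hj' : (1:ℝ) ≤ (j:ℝ) := by exact_mod_cast hj
      have hk0 : (0:ℝ) ≤ (k:ℝ) := Nat.cast_nonneg k
      nlinarith
    have h2 : (0:ℝ) < (j:ℝ) + k + 1 := by positivity
    have : ((2:ℝ) * j + 2 * k + 2) = 2 * ((j:ℝ) + k + 1) := by ring
    nlinarith
  have hb := b_pos j k
  have := mul_le_mul_of_nonneg_right hbound hb.le
  calc b j (k + 1) = (π ^ 2 / 4) * ((j:ℝ) + k + 1) * b j k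
        / (((2:ℝ) * j + 2 * k + 2) * ((2:ℝ) * j + 2 * k + 1) * ((k:ℝ) + 1)) := by
        rw [← heq]; field_simp
    _ ≤ 1 / 2 * b j k := by
        rw [div_le_iff₀ hD]
        nlinarith

lemma norm_a (j k : ℕ) : ‖a j k‖ = b j k := by
  rw [a_eq, norm_mul, norm_pow, norm_neg, norm_one, one_pow, one_mul,
    Real.norm_eq_abs, abs_of_pos (b_pos j k)]

lemma summable_a (j : ℕ) (hj : 1 ≤ j) : Summable (a j) := by
  apply summable_of_ratio_norm_eventually_le (r := 1/2) (by norm_num)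
  filter_upwards with k
  rw [norm_a, norm_a]
  exact b_step j k hj

lemma t_pos (j : ℕ) (hj : 1 ≤ j) : 0 < t j := by
  have hs := summable_a j hj
  have hse : Summable (fun n => a j (2 * n)) :=
    hs.comp_injective (fun m n h => by omega)
  have hso : Summable (fun n => a j (2 * n + 1)) :=
    hs.comp_injective (fun m n h => by omega)
  have hsplit : ∑' n, (a j (2 * n) + a j (2 * n + 1)) = t j := by
    rw [hse.tsum_add hso, t, tsum_even_add_odd hse hso]
  rw [← hsplit]
  refine (hse.add hso).tsum_pos ?_ 0 ?_
  · intro n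
    have h1 : a j (2 * n) = b j (2 * n) := by
      rw [a_eq, pow_mul]; norm_num
    have h2 : a j (2 * n + 1) = -b j (2 * n + 1) := by
      rw [a_eq, pow_succ, pow_mul]; norm_num
    have := b_step j (2 * n) hj
    have := b_pos j (2 * n)
    rw [h1, h2]
    linarith
  · have h1 : a j (2 * 0) = b j (2 * 0) := by
      rw [a_eq]; norm_num
    have h2 : a j (2 * 0 + 1) = -b j (2 * 0 + 1) := by
      rw [a_eq]; norm_num
    have := b_step j (2 * 0) hj
    have := b_pos j (2 * 0)
    rw [h1, h2]
    linarith

/-- For `m ≥ 1` and `−1/2 < x < 1/2`, `P_m(x) < P_{m+1}(x)`. -/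
theorem P_lt_P_succ (m : ℕ) (hm : 1 ≤ m) (x : ℝ) (hx1 : -(1 / 2) < x) (hx2 : x < 1 / 2) :
    P m x < P (m + 1) x := by

  have hstep : P (m + 1) x = P m x + t (m + 1) * π ^ (2 * (m + 1)) * (1 / 4 - x ^ 2) ^ (m + 1) := by
    rw [P, Finset.sum_Icc_succ_top (by omega), ← P]
  rw [hstep]
  have hx : 0 < 1 / 4 - x ^ 2 := by nlinarith
  have ht : 0 < t (m + 1) := t_pos (m + 1) (by omega)
  have : 0 < t (m + 1) * π ^ (2 * (m + 1)) * (1 / 4 - x ^ 2) ^ (m + 1) := by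
    have hπ : 0 < π := Real.pi_pos
    positivity
  linarith
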